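/- Let X be a finite collection of finite sets, and let p = log_3(27/4). Then the number of triples (A₁, A₂, A) ∈ X × X × X such that A is the disjoint union of A₁ and A₂ is at most |X|^(3/p). -/

import Mathlib

open Real

namespace KT

noncomputable section

/-- `s = log 3 / log (9/4)`, the key exponent. -/
def S : ℝ := Real.log 3 / Real.log (9/4)
/-- `t = s/(s+1) = log 3 / log (27/4)`. -/
def T : ℝ := S / (S + 1)
/-- `q = s + 1`, the conjugate-type exponent. -/
def Q : ℝ := S + 1
/-- `c = 1/s`. -/
def C : ℝ := 1 / S

lemma log94_pos : 0 < Real.log (9/4) := by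
  apply Real.log_pos; norm_num

lemma log3_pos : 0 < Real.log 3 := Real.log_pos (by norm_num)

lemma S_mul : S * Real.log (9/4) = Real.log 3 := by
  unfold S; field_simp

lemma log94_lt_log3 : Real.log (9/4) < Real.log 3 := by
  apply Real.log_lt_log (by norm_num) (by norm_num)

lemma S_gt_one : 1 < S := by
  rw [S, lt_div_iff₀ log94_pos, one_mul]; exact log94_lt_log3

lemma S_pos : 0 < S := lt_trans one_pos S_gt_one

lemma Q_pos : 0 < Q := by unfold Q; linarith [S_pos]
lemma Q_gt_one : 1 < Q := by unfold Q; linarith [S_pos]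

lemma S1_pos : 0 < S + 1 := by linarith [S_pos]
lemma S1_ne : S + 1 ≠ 0 := ne_of_gt S1_pos

lemma T_pos : 0 < T := div_pos S_pos S1_pos

lemma T_lt_one : T < 1 := by
  rw [T, div_lt_one (by linarith [S_pos])]; linarith

lemma TQ : T * Q = S := by
  rw [T, Q]; field_simp [S1_ne]

lemma one_sub_T : 1 - T = 1 / Q := by
  rw [T, Q]; field_simp [S1_ne]; ring

lemma Q_one_sub_T : Q * (1 - T) = 1 := by
  rw [one_sub_T]; field_simp [ne_of_gt Q_pos]

lemma Tm1_Q : (T - 1) * Q = -1 := by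
  have h := Q_one_sub_T; linear_combination -h

lemma Q_sub_one : Q - 1 = S := by unfold Q; ring

lemma CS : C * S = 1 := by
  rw [C]; field_simp [ne_of_gt S_pos]

lemma C_pos : 0 < C := div_pos one_pos S_pos

lemma C_lt_one : C < 1 := by
  rw [C, div_lt_one S_pos]; exact S_gt_one

lemma one_sub_T_div_T : (1 - T) / T = C := by
  rw [one_sub_T, T, Q, C]
  rw [div_div_eq_mul_div, div_mul_eq_mul_div, one_mul, div_div]
  rw [← div_div, div_self S1_ne]

lemma rpow94 : (9/4 : ℝ) ^ S = 3 := by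
  rw [Real.rpow_def_of_pos (by norm_num), mul_comm, S_mul, Real.exp_log (by norm_num)]

lemma rpow49 : (4/9 : ℝ) ^ S = 1/3 := by
  have h : (4/9:ℝ) = ((9:ℝ)/4)⁻¹ := by norm_num
  rw [h, Real.inv_rpow (by norm_num), rpow94]
  norm_num

lemma twoS_gt_one : 1 < 2 * S := by linarith [S_gt_one]

/-- `x^e + (1-x)^e ≤ 1` for `x ∈ [0,1]`, `e ≥ 1`. -/
lemma xs_aux {e : ℝ} (he : 1 ≤ e) {x : ℝ} (h0 : 0 ≤ x) (h1 : x ≤ 1) :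
    x ^ e + (1 - x) ^ e ≤ 1 := by
  have hA : x ^ e ≤ x := by
    rcases eq_or_lt_of_le h0 with h | h
    · rw [← h, Real.zero_rpow (by linarith)]
    · calc x ^ e ≤ x ^ (1:ℝ) := Real.rpow_le_rpow_of_exponent_ge h h1 he
        _ = x := Real.rpow_one x
  have hB : (1 - x) ^ e ≤ 1 - x := by
    rcases eq_or_lt_of_le (by linarith : (0:ℝ) ≤ 1 - x) with h | h
    · rw [← h, Real.zero_rpow (by linarith)]
    · calc (1-x) ^ e ≤ (1-x) ^ (1:ℝ) :=
            Real.rpow_le_rpow_of_exponent_ge h (by linarith) he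
        _ = 1 - x := Real.rpow_one _
  linarith

/-- Two-point Hölder inequality. -/
lemma holder2 {x y X Y : ℝ} (hx : 0 ≤ x) (hy : 0 ≤ y) (hX : 0 ≤ X) (hY : 0 ≤ Y) :
    x ^ T * X + y ^ T * Y ≤ (x + y) ^ T * (X ^ Q + Y ^ Q) ^ (1 - T) := by
  rcases eq_or_lt_of_le (by positivity : (0:ℝ) ≤ x + y) with hS | hS
  · have hx0 : x = 0 := by linarith
    have hy0 : y = 0 := by linarith
    simp [hx0, hy0, Real.zero_rpow (ne_of_gt T_pos)]
  rcases eq_or_lt_of_le (by positivity : (0:ℝ) ≤ X ^ Q + Y ^ Q) with hR | hR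
  · have h1 : X ^ Q = 0 := by
      nlinarith [Real.rpow_nonneg hX Q, Real.rpow_nonneg hY Q]
    have h2 : Y ^ Q = 0 := by
      nlinarith [Real.rpow_nonneg hX Q, Real.rpow_nonneg hY Q]
    have hX0 : X = 0 := by
      by_contra hne
      have hXpos : 0 < X := lt_of_le_of_ne hX (Ne.symm hne)
      exact absurd h1 (ne_of_gt (Real.rpow_pos_of_pos hXpos Q))
    have hY0 : Y = 0 := by
      by_contra hne
      have hYpos : 0 < Y := lt_of_le_of_ne hY (Ne.symm hne)
      exact absurd h2 (ne_of_gt (Real.rpow_pos_of_pos hYpos Q))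
    simp [hX0, hY0]
    positivity
  set R := X ^ Q + Y ^ Q with hRdef
  have hPne : ((x+y) ^ T * R ^ (1-T)) ≠ 0 := by
    have h1 : (0:ℝ) < (x+y) ^ T := Real.rpow_pos_of_pos hS T
    have h2 : (0:ℝ) < R ^ (1-T) := Real.rpow_pos_of_pos hR (1-T)
    positivity
  have key : ∀ u W : ℝ, 0 ≤ u → 0 ≤ W →
      u ^ T * W ≤ (x+y) ^ T * R ^ (1-T) * (T * (u/(x+y)) + (1-T) * (W^Q/R)) := by
    intro u W hu hW
    have e1 : (u/(x+y)) ^ T * ((W^Q)/R) ^ (1-T) ≤ T*(u/(x+y)) + (1-T)*(W^Q/R) :=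
      Real.geom_mean_le_arith_mean2_weighted (le_of_lt T_pos) (by linarith [T_lt_one])
        (div_nonneg hu (le_of_lt hS)) (div_nonneg (Real.rpow_nonneg hW Q) (le_of_lt hR))
        (by ring)
    have hWQ : (W ^ Q) ^ (1 - T) = W := by
      rw [← Real.rpow_mul hW, Q_one_sub_T, Real.rpow_one]
    have e2 : (u/(x+y)) ^ T * ((W^Q)/R) ^ (1-T)
        = u ^ T * W / ((x+y) ^ T * R ^ (1-T)) := by
      rw [Real.div_rpow hu (le_of_lt hS),
        Real.div_rpow (Real.rpow_nonneg hW Q) (le_of_lt hR), hWQ]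
      field_simp
    calc u ^ T * W
        = ((x+y)^T * R^(1-T)) * (u^T*W/((x+y)^T*R^(1-T))) := by field_simp
      _ = ((x+y)^T*R^(1-T)) * ((u/(x+y))^T * ((W^Q)/R)^(1-T)) := by rw [e2]
      _ ≤ _ := by
          apply mul_le_mul_of_nonneg_left e1
          have h1 : (0:ℝ) < (x+y) ^ T := Real.rpow_pos_of_pos hS T
          have h2 : (0:ℝ) < R ^ (1-T) := Real.rpow_pos_of_pos hR (1-T)
          positivity
  have k1 := key x X hx hX
  have k2 := key y Y hy hY
  have hsum : (T*(x/(x+y)) + (1-T)*(X^Q/R)) + (T*(y/(x+y)) + (1-T)*(Y^Q/R)) = 1 := by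
    field_simp
    ring
  calc x ^ T * X + y ^ T * Y
      ≤ (x+y)^T*R^(1-T) * (T*(x/(x+y)) + (1-T)*(X^Q/R))
        + (x+y)^T*R^(1-T) * (T*(y/(x+y)) + (1-T)*(Y^Q/R)) := add_le_add k1 k2
    _ = (x+y)^T*R^(1-T) *
        ((T*(x/(x+y)) + (1-T)*(X^Q/R)) + (T*(y/(x+y)) + (1-T)*(Y^Q/R))) := by ring
    _ = (x+y)^T*R^(1-T) := by rw [hsum, mul_one]

lemma pow23 : (2/3 : ℝ) ^ (2*S) = 1/3 := by
  rw [Real.rpow_mul (by norm_num : (0:ℝ) ≤ 2/3)]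
  rw [show ((2:ℝ)/3) ^ (2:ℝ) = ((2:ℝ)/3) ^ (2:ℕ) by
    rw [← Real.rpow_natCast ((2:ℝ)/3) 2]; norm_num]
  rw [show ((2:ℝ)/3) ^ (2:ℕ) = 4/9 by norm_num]
  exact rpow49

lemma chi_neg {r : ℝ} (h0 : 0 < r) (h1 : r < 2/3) : 2*r - 1 - r^(2*S) < 0 := by
  have SCO := strictConvexOn_rpow twoS_gt_one
  have hr1 : r < 1 := by linarith
  have hne : (1:ℝ) - r ≠ 0 := ne_of_gt (by linarith)
  set θ : ℝ := (1/3)/(1-r) with hθ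
  have hθ0 : 0 < θ := by apply div_pos <;> linarith
  have hθ1 : θ < 1 := by rw [hθ, div_lt_one (by linarith)]; linarith
  have hcomb : θ • r + (1-θ) • (1:ℝ) = 2/3 := by
    simp only [smul_eq_mul, mul_one, hθ]
    field_simp
    ring
  have h2 := SCO.2 (Set.mem_Ici.2 (le_of_lt h0)) (Set.mem_Ici.2 zero_le_one)
    (ne_of_lt hr1) hθ0 (show (0:ℝ) < 1-θ by linarith) (by ring)
  rw [hcomb] at h2
  simp only [smul_eq_mul, Real.one_rpow] at h2
  rw [pow23] at h2
  -- 1/3 < θ * r^(2S) + (1-θ)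
  have h3 : θ - 2/3 < θ * r^(2*S) := by linarith
  have h4 : (θ - 2/3)/θ < r^(2*S) := by
    rw [div_lt_iff₀ hθ0, mul_comm]; exact h3
  have h5 : (θ - 2/3)/θ = 2*r - 1 := by
    rw [hθ]
    field_simp
    ring
  rw [h5] at h4
  linarith

lemma chi_pos {r : ℝ} (h0 : 2/3 < r) (h1 : r < 1) : 0 < 2*r - 1 - r^(2*S) := by
  have SCO := strictConvexOn_rpow twoS_gt_one
  set θ : ℝ := 3*(1-r) with hθ
  have hθ0 : 0 < θ := by rw [hθ]; linarith
  have hθ1 : θ < 1 := by rw [hθ]; linarith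
  have hcomb : θ • (2/3:ℝ) + (1-θ) • (1:ℝ) = r := by
    simp only [smul_eq_mul, mul_one, hθ]; ring
  have h2 := SCO.2 (Set.mem_Ici.2 (by norm_num : (0:ℝ) ≤ 2/3))
    (Set.mem_Ici.2 zero_le_one) (by norm_num) hθ0
    (show (0:ℝ) < 1-θ by linarith) (by ring)
  rw [hcomb] at h2
  simp only [smul_eq_mul, Real.one_rpow] at h2
  rw [pow23] at h2
  -- r^(2S) < θ/3 + (1-θ)
  have h6 : θ * (1/3) + (1-θ) = 2*r - 1 := by rw [hθ]; ring
  linarith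

/-- The Ω function. -/
def Om (r : ℝ) : ℝ := Real.log (1 - r^(2*S)) - S * Real.log (r*(1-r))

lemma Om_hasDeriv {r : ℝ} (h0 : 0 < r) (h1 : r < 1) :
    HasDerivAt Om
      (-(2*S * r^(2*S-1))/(1 - r^(2*S)) - S*((1*(1-r) + r*(-1))/(r*(1-r)))) r := by
  have hlt : r^(2*S) < 1 := Real.rpow_lt_one (le_of_lt h0) h1 (by linarith [twoS_gt_one])
  have hpos : 0 < 1 - r^(2*S) := by linarith
  have hrr : 0 < r*(1-r) := by nlinarith
  have p1 : HasDerivAt (fun x : ℝ => 1 - x^(2*S)) (-(2*S * r^(2*S-1))) r := by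
    have := (Real.hasDerivAt_rpow_const (x := r) (p := 2*S) (Or.inl (ne_of_gt h0)))
    exact this.const_sub 1
  have p1' := p1.log (ne_of_gt hpos)
  have p2 : HasDerivAt (fun x : ℝ => x*(1-x)) (1*(1-r) + r*(-1)) r := by
    have ha := hasDerivAt_id r
    have hb := (hasDerivAt_id r).const_sub 1
    exact ha.mul hb
  have p2' := (p2.log (ne_of_gt hrr)).const_mul S
  have := p1'.sub p2'
  exact this

lemma Om_deriv_sign {r : ℝ} (h0 : 0 < r) (h1 : r < 1) :
    (-(2*S * r^(2*S-1))/(1 - r^(2*S)) - S*((1*(1-r) + r*(-1))/(r*(1-r))))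
      = S * (2*r - 1 - r^(2*S)) / ((1 - r^(2*S))*(r*(1-r))) := by
  have hlt : r^(2*S) < 1 := Real.rpow_lt_one (le_of_lt h0) h1 (by linarith [twoS_gt_one])
  have hpos : 0 < 1 - r^(2*S) := by linarith
  have hrr : 0 < r*(1-r) := by nlinarith
  have hpow : r ^ (2*S) = r ^ (2*S-1) * r := by
    nth_rewrite 1 [show 2*S = (2*S-1)+1 by ring]
    exact Real.rpow_add_one (ne_of_gt h0) _
  rw [hpow] at hpos ⊢
  have hr0 : r ≠ 0 := ne_of_gt h0
  have h1r : (1:ℝ) - r ≠ 0 := ne_of_gt (by linarith)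
  have hden : 1 - r ^ (2*S-1) * r ≠ 0 := ne_of_gt hpos
  field_simp
  ring

lemma Om_ge {r : ℝ} (h0 : 0 < r) (h1 : r < 1) : Om (2/3) ≤ Om r := by
  have hc23 : (0:ℝ) < 2/3 := by norm_num
  have key : ∀ x, 0 < x → x < 1 → deriv Om x
      = S * (2*x - 1 - x^(2*S)) / ((1 - x^(2*S))*(x*(1-x))) := by
    intro x hx0 hx1
    rw [(Om_hasDeriv hx0 hx1).deriv]
    exact Om_deriv_sign hx0 hx1
  have cont : ∀ x, 0 < x → x < 1 → ContinuousAt Om x := by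
    intro x hx0 hx1
    exact (Om_hasDeriv hx0 hx1).continuousAt
  rcases lt_trichotomy r (2/3) with hlt | heq | hgt
  · have anti : StrictAntiOn Om (Set.Ioc 0 (2/3)) := by
      apply strictAntiOn_of_deriv_neg (convex_Ioc 0 (2/3))
      · intro x hx
        exact (cont x hx.1 (lt_of_le_of_lt hx.2 (by norm_num))).continuousWithinAt
      · intro x hx
        rw [interior_Ioc] at hx
        have hx1 : x < 1 := lt_trans hx.2 (by norm_num)
        rw [key x hx.1 hx1]
        apply div_neg_of_neg_of_pos
        · have := chi_neg hx.1 hx.2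
          nlinarith [S_pos]
        · have hlt2 : x^(2*S) < 1 :=
            Real.rpow_lt_one (le_of_lt hx.1) hx1 (by linarith [twoS_gt_one])
          have h5 : (0:ℝ) < x*(1-x) := mul_pos hx.1 (by linarith)
          exact mul_pos (by linarith) h5
    exact le_of_lt (anti (Set.mem_Ioc.2 ⟨h0, le_of_lt hlt⟩)
      (Set.mem_Ioc.2 ⟨hc23, le_refl _⟩) hlt)
  · rw [heq]
  · have mono : StrictMonoOn Om (Set.Ico (2/3) 1) := by
      apply strictMonoOn_of_deriv_pos (convex_Ico (2/3) 1)
      · intro x hx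
        exact (cont x (lt_of_lt_of_le hc23 hx.1) hx.2).continuousWithinAt
      · intro x hx
        rw [interior_Ico] at hx
        have hx0 : 0 < x := lt_trans hc23 hx.1
        rw [key x hx0 hx.2]
        apply div_pos
        · have := chi_pos hx.1 hx.2
          nlinarith [S_pos]
        · have hlt2 : x^(2*S) < 1 :=
            Real.rpow_lt_one (le_of_lt hx0) hx.2 (by linarith [twoS_gt_one])
          have h5 : (0:ℝ) < x*(1-x) := mul_pos hx0 (by linarith [hx.2])
          exact mul_pos (by linarith) h5
    exact le_of_lt (mono (Set.mem_Ico.2 ⟨le_refl _, by norm_num⟩)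
      (Set.mem_Ico.2 ⟨le_of_lt hgt, h1⟩) hgt)

lemma Om_23 : Om (2/3) = Q * Real.log 2 := by
  have h94 : Real.log (9/4) = 2*Real.log 3 - 2*Real.log 2 := by
    rw [show (9:ℝ)/4 = 3^(2:ℕ)/2^(2:ℕ) by norm_num,
      Real.log_div (by norm_num) (by norm_num), Real.log_pow, Real.log_pow]
    push_cast; ring
  have hS := S_mul
  rw [h94] at hS
  unfold Om Q
  rw [pow23]
  rw [show (2:ℝ)/3*(1-2/3) = 2/9 by norm_num, show (1:ℝ) - 1/3 = 2/3 by norm_num]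
  rw [show (2:ℝ)/9 = 2/(3^(2:ℕ)) by norm_num, show (2:ℝ)/3 = 2/3 by norm_num]
  rw [Real.log_div (by norm_num) (by norm_num), Real.log_div (by norm_num) (by norm_num),
    Real.log_pow]
  push_cast
  linarith [hS]

/-- The one-dimensional diagonal inequality. -/
lemma psi_le_one {r : ℝ} (h0 : 0 ≤ r) (h1 : r ≤ 1) :
    r ^ (2*S) + 2 ^ Q * (r * (1 - r)) ^ S ≤ 1 := by
  rcases eq_or_lt_of_le h0 with h | h0'
  · rw [← h, Real.zero_rpow (by nlinarith [twoS_gt_one] : 2*S ≠ 0)]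
    rw [show (0:ℝ)*(1-0) = 0 by ring, Real.zero_rpow (ne_of_gt S_pos)]
    norm_num
  rcases eq_or_lt_of_le h1 with h | h1'
  · rw [h]
    rw [Real.one_rpow, show (1:ℝ)*(1-1) = 0 by ring, Real.zero_rpow (ne_of_gt S_pos)]
    norm_num
  have hOm := Om_ge h0' h1'
  rw [Om_23] at hOm
  have hrr : 0 < r*(1-r) := by nlinarith
  have hlt : r^(2*S) < 1 := Real.rpow_lt_one h0 h1' (by linarith [twoS_gt_one])
  have hpos : 0 < 1 - r^(2*S) := by linarith
  have hlog : Real.log (2^Q * (r*(1-r))^S) ≤ Real.log (1 - r^(2*S)) := by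
    rw [Real.log_mul (by positivity) (by positivity)]
    rw [Real.log_rpow (by norm_num : (0:ℝ) < 2), Real.log_rpow hrr]
    unfold Om at hOm
    linarith
  have h2 : (2:ℝ)^Q * (r*(1-r))^S ≤ 1 - r^(2*S) := by
    have hL : (0:ℝ) < 2^Q * (r*(1-r))^S := by positivity
    exact (Real.log_le_log_iff hL hpos).1 hlog
  linarith

/-- Key claim: `(ρ²-1)(ρ^c-1)^(1-c) ≤ (ρ^(c+1)-1)^(2-c)` for `ρ > 1`. -/
lemma claim_rho {ρ : ℝ} (hρ : 1 < ρ) :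
    (ρ ^ (2:ℝ) - 1) * (ρ ^ C - 1) ^ (1 - C) ≤ (ρ ^ (C+1) - 1) ^ (2 - C) := by
  have hρ0 : (0:ℝ) < ρ := by linarith
  have hc0 : 0 < C := C_pos
  have hc1 : C < 1 := C_lt_one
  have hlogρ : 0 < Real.log ρ := Real.log_pos hρ
  have hgt : ∀ x : ℝ, 0 < x → 1 < ρ ^ x := by
    intro x hx
    rw [Real.one_lt_rpow_iff_of_pos hρ0]
    exact Or.inl ⟨hρ, hx⟩
  set φ : ℝ → ℝ := fun x => Real.log (ρ ^ x - 1) with hφ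
  have hder : ∀ x : ℝ, 0 < x →
      HasDerivAt φ ((ρ ^ x * Real.log ρ) / (ρ ^ x - 1)) x := by
    intro x hx
    have h1 := (Real.hasStrictDerivAt_const_rpow hρ0 x).hasDerivAt
    have h2 := h1.sub_const 1
    exact h2.log (by have := hgt x hx; linarith)
  have hconc : ConcaveOn ℝ (Set.Icc C 2) φ := by
    apply AntitoneOn.concaveOn_of_deriv (convex_Icc C 2)
    · intro x hx
      have hx0 : 0 < x := lt_of_lt_of_le hc0 hx.1
      exact (hder x hx0).continuousAt.continuousWithinAt
    · intro x hx
      rw [interior_Icc] at hx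
      have hx0 : 0 < x := lt_trans hc0 hx.1
      exact (hder x hx0).differentiableAt.differentiableWithinAt
    · rw [interior_Icc]
      intro x hx y hy hxy
      have hx0 : 0 < x := lt_trans hc0 hx.1
      have hy0 : 0 < y := lt_trans hc0 hy.1
      rw [(hder x hx0).deriv, (hder y hy0).deriv]
      have h1x : 1 < ρ ^ x := hgt x hx0
      have h1y : 1 < ρ ^ y := hgt y hy0
      have hxyp : ρ ^ x ≤ ρ ^ y := Real.rpow_le_rpow_of_exponent_le (le_of_lt hρ) hxy
      rw [div_le_div_iff₀ (by linarith) (by linarith)]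
      have : ρ ^ y * (ρ ^ x - 1) ≤ ρ ^ x * (ρ ^ y - 1) := by nlinarith
      nlinarith
  set w₁ : ℝ := (1-C)/(2-C) with hw₁
  set w₂ : ℝ := 1/(2-C) with hw₂
  have h2C : (0:ℝ) < 2 - C := by linarith
  have hw₁0 : 0 ≤ w₁ := div_nonneg (by linarith) (by linarith)
  have hw₂0 : 0 ≤ w₂ := div_nonneg (by norm_num) (by linarith)
  have hsum : w₁ + w₂ = 1 := by rw [hw₁, hw₂]; field_simp; ring
  have hmemC : C ∈ Set.Icc C 2 := Set.mem_Icc.2 ⟨le_refl _, by linarith⟩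
  have hmem2 : (2:ℝ) ∈ Set.Icc C 2 := Set.mem_Icc.2 ⟨by linarith, le_refl _⟩
  have hJ := hconc.2 hmemC hmem2 hw₁0 hw₂0 hsum
  have hcomb : w₁ • C + w₂ • (2:ℝ) = C + 1 := by
    simp only [smul_eq_mul, hw₁, hw₂]
    field_simp
    ring
  rw [hcomb] at hJ
  simp only [smul_eq_mul] at hJ
  -- multiply by (2-C)
  have hJ2 : (1-C) * φ C + φ 2 ≤ (2-C) * φ (C+1) := by
    have := mul_le_mul_of_nonneg_left hJ (le_of_lt h2C)
    calc (1-C) * φ C + φ 2 = (2-C) * (w₁ * φ C + w₂ * φ 2) := by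
          rw [hw₁, hw₂]; field_simp
      _ ≤ (2-C) * φ (C+1) := this
  -- exponentiate
  have hA : (0:ℝ) < ρ ^ (2:ℝ) - 1 := by have := hgt 2 (by norm_num); linarith
  have hB : (0:ℝ) < ρ ^ C - 1 := by have := hgt C hc0; linarith
  have hD : (0:ℝ) < ρ ^ (C+1) - 1 := by have := hgt (C+1) (by linarith); linarith
  have hL : (0:ℝ) < (ρ ^ (2:ℝ) - 1) * (ρ ^ C - 1) ^ (1 - C) := by
    have := Real.rpow_pos_of_pos hB (1-C); positivity
  have hR : (0:ℝ) < (ρ ^ (C+1) - 1) ^ (2 - C) := Real.rpow_pos_of_pos hD _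
  rw [← Real.log_le_log_iff hL hR]
  rw [Real.log_mul (ne_of_gt hA) (ne_of_gt (Real.rpow_pos_of_pos hB (1-C))),
    Real.log_rpow hB, Real.log_rpow hD]
  have hφ2 : φ 2 = Real.log (ρ ^ (2:ℝ) - 1) := rfl
  have hφC : φ C = Real.log (ρ ^ C - 1) := rfl
  have hφC1 : φ (C+1) = Real.log (ρ ^ (C+1) - 1) := rfl
  linarith [hJ2]

set_option maxHeartbeats 1000000 in
/-- At a nonsymmetric critical point, the value inequality. -/
lemma crit_case {a b : ℝ} (ha0 : 0 < a) (ha1 : a < 1) (hb0 : 0 < b) (hb1 : b < 1)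
    (hab : b < a)
    (hrel : a * (a*(1-b))^(T-1) = b * ((1-a)*b)^(T-1)) :
    (a * ((1-a) + (1-b)))^S ≤ 1-b := by
  set V1 : ℝ := 1 - a with hV1
  set V2 : ℝ := 1 - b with hV2
  have hV10 : 0 < V1 := by rw [hV1]; linarith
  have hV20 : 0 < V2 := by rw [hV2]; linarith
  have hV12 : V1 < V2 := by rw [hV1, hV2]; linarith
  set ρ : ℝ := V2 / V1 with hρdef
  have hρ : 1 < ρ := by rw [hρdef, lt_div_iff₀ hV10]; linarith
  have hρ0 : (0:ℝ) < ρ := by linarith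
  have hV2eq : V2 = ρ * V1 := by rw [hρdef]; field_simp
  clear_value ρ
  have hT0 := T_pos
  have hT1 := T_lt_one
  -- rewrite the relation as a^T * V2^(T-1) = b^T * V1^(T-1)
  have hrel2 : a^T * V2^(T-1) = b^T * V1^(T-1) := by
    have e1 : (a*V2)^(T-1) = a^(T-1) * V2^(T-1) :=
      Real.mul_rpow (le_of_lt ha0) (le_of_lt hV20)
    have e2 : (V1*b)^(T-1) = V1^(T-1) * b^(T-1) :=
      Real.mul_rpow (le_of_lt hV10) (le_of_lt hb0)
    have e3 : a * a^(T-1) = a^T := by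
      nth_rewrite 2 [show T = (T-1)+1 by ring]
      rw [Real.rpow_add_one (ne_of_gt ha0)]; ring
    have e4 : b * b^(T-1) = b^T := by
      nth_rewrite 2 [show T = (T-1)+1 by ring]
      rw [Real.rpow_add_one (ne_of_gt hb0)]; ring
    have h5 : a * (a^(T-1) * V2^(T-1)) = b * (V1^(T-1) * b^(T-1)) := by
      rw [← e1, ← e2]; exact hrel
    calc a^T * V2^(T-1) = a * (a^(T-1) * V2^(T-1)) := by rw [← e3]; ring
      _ = b * (V1^(T-1) * b^(T-1)) := h5
      _ = (b * b^(T-1)) * V1^(T-1) := by ring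
      _ = b^T * V1^(T-1) := by rw [e4]
  have hx2 : V2^(T-1) * V2^(1-T) = 1 := by
    rw [← Real.rpow_add hV20]; norm_num
  have hy2 : V1^(T-1) * V1^(1-T) = 1 := by
    rw [← Real.rpow_add hV10]; norm_num
  have h1' : a^T * V1^(1-T) = b^T * V2^(1-T) := by
    linear_combination (V1^(1-T)*V2^(1-T))*hrel2 + (-(a^T*V1^(1-T)))*hx2
      + (b^T*V2^(1-T))*hy2
  -- derive a/b = ρ^C
  have hκ : a / b = ρ ^ C := by
    have h1 : (a/b)^T = ρ^(1-T) := by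
      rw [Real.div_rpow (le_of_lt ha0) (le_of_lt hb0), hρdef,
        Real.div_rpow (le_of_lt hV20) (le_of_lt hV10)]
      rw [div_eq_div_iff (ne_of_gt (Real.rpow_pos_of_pos hb0 T))
        (ne_of_gt (Real.rpow_pos_of_pos hV10 (1-T)))]
      linarith [h1']
    have h2 := congrArg (fun z : ℝ => z ^ (1/T)) h1
    rw [← Real.rpow_mul (le_of_lt (div_pos ha0 hb0)),
      ← Real.rpow_mul (le_of_lt hρ0)] at h2
    rw [mul_one_div, div_self (ne_of_gt hT0), Real.rpow_one] at h2
    rw [mul_one_div, one_sub_T_div_T] at h2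
    exact h2
  have ha_eq : a = ρ^C * b := by
    have := (div_eq_iff (ne_of_gt hb0)).1 hκ
    linarith
  have hb_eq : b = 1 - ρ * V1 := by rw [← hV2eq, hV2]; ring
  have hρC1 : 1 < ρ^C := by
    rw [Real.one_lt_rpow_iff_of_pos hρ0]; exact Or.inl ⟨hρ, C_pos⟩
  have hrcc : ρ^(C+1) = ρ^C * ρ := Real.rpow_add_one (ne_of_gt hρ0) C
  set E : ℝ := ρ^(C+1) - 1 with hE
  have hE0 : 0 < E := by
    rw [hE, hrcc]; nlinarith
  clear_value E
  have ha_eq1 : 1 - V1 = (1 - ρ*V1) * ρ^C := by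
    rw [← hb_eq, hV1]; linear_combination ha_eq
  have hV1E : V1 * E = ρ^C - 1 := by
    rw [hE, hrcc]; nlinarith [ha_eq1]
  have hV1eq : V1 = (ρ^C - 1)/E := by
    rw [eq_div_iff (ne_of_gt hE0)]; exact hV1E
  have hbE : b = (ρ - 1)/E := by
    rw [hb_eq, hV1eq]
    rw [eq_div_iff (ne_of_gt hE0)]
    field_simp [ne_of_gt hE0]
    rw [hE, hrcc]
    ring
  have hsq : ρ^(2:ℝ) = ρ * ρ := by rw [Real.rpow_two]; ring
  have hEsq : E^(2:ℝ) = E * E := by rw [Real.rpow_two]; ring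
  -- the key estimate
  have hsum_eq : a*(V1+V2) = ρ^C*(((ρ^(2:ℝ)-1)*(ρ^C-1))/(E^(2:ℝ))) := by
    rw [hsq, hEsq, ha_eq, hbE, hV2eq, hV1eq]
    field_simp [ne_of_gt hE0]
    ring
  have hfin : a*(V1+V2) ≤ V2^C := by
    have hVC : V2^C = ρ^C * ((ρ^C-1)^C / E^C) := by
      rw [hV2eq, hV1eq, Real.mul_rpow (le_of_lt hρ0)
        (le_of_lt (div_pos (by linarith) hE0)),
        Real.div_rpow (by linarith) (le_of_lt hE0)]
    rw [hsum_eq, hVC]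
    have hρC0 : (0:ℝ) < ρ^C := by linarith
    apply mul_le_mul_of_nonneg_left _ (le_of_lt hρC0)
    have hE2pos : (0:ℝ) < E^(2:ℝ) := by rw [hEsq]; exact mul_pos hE0 hE0
    rw [div_le_div_iff₀ hE2pos (Real.rpow_pos_of_pos hE0 C)]
    have hsplit1 : ρ^C - 1 = (ρ^C-1)^C * (ρ^C-1)^(1-C) := by
      rw [← Real.rpow_add (by linarith)]; norm_num
    have hsplit2 : E^(2:ℝ) = E^C * E^(2-C) := by
      rw [← Real.rpow_add hE0]; norm_num
    have hclaim := claim_rho hρ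
    rw [← hE] at hclaim
    calc (ρ^(2:ℝ)-1)*(ρ^C-1) * E^C
        = ((ρ^(2:ℝ)-1) * (ρ^C-1)^(1-C)) * ((ρ^C-1)^C * E^C) := by
          conv_lhs => rw [hsplit1]
          ring
      _ ≤ E^(2-C) * ((ρ^C-1)^C * E^C) := by
          apply mul_le_mul_of_nonneg_right hclaim
          have h7 := Real.rpow_pos_of_pos (show (0:ℝ) < ρ^C - 1 by linarith) C
          have h8 := Real.rpow_pos_of_pos hE0 C
          positivity
      _ = (ρ^C-1)^C * E^(2:ℝ) := by rw [hsplit2]; ring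
  -- conclude by raising to the S
  have h9 : (0:ℝ) ≤ a*(V1+V2) := le_of_lt (mul_pos ha0 (by linarith))
  calc (a * (V1+V2))^S ≤ (V2^C)^S :=
        Real.rpow_le_rpow h9 hfin (le_of_lt S_pos)
    _ = V2^(C*S) := by rw [← Real.rpow_mul (le_of_lt hV20)]
    _ = V2 := by rw [CS, Real.rpow_one]

/-- The two-variable function whose boundedness is the heart of the matter. -/
def Mf (a b : ℝ) : ℝ := (a*b) ^ S + (((1-a)*b) ^ T + (a*(1-b)) ^ T) ^ Q

lemma Mf_symm (a b : ℝ) : Mf a b = Mf b a := by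
  unfold Mf
  rw [mul_comm b a, mul_comm (1-b) a, mul_comm b (1-a), add_comm (((1-a)*b)^T)]

lemma rpow_TQ {x : ℝ} (hx : 0 ≤ x) : (x^T)^Q = x^S := by
  rw [← Real.rpow_mul hx, TQ]

lemma Mf_left {b : ℝ} (hb0 : 0 ≤ b) (hb1 : b ≤ 1) : Mf 0 b ≤ 1 := by
  unfold Mf
  rw [zero_mul, Real.zero_rpow (ne_of_gt S_pos), zero_mul,
    Real.zero_rpow (ne_of_gt T_pos), sub_zero, one_mul, add_zero, zero_add,
    rpow_TQ hb0]
  exact Real.rpow_le_one hb0 hb1 (le_of_lt S_pos)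

lemma Mf_right {b : ℝ} (hb0 : 0 ≤ b) (hb1 : b ≤ 1) : Mf 1 b ≤ 1 := by
  unfold Mf
  rw [one_mul, sub_self, zero_mul, Real.zero_rpow (ne_of_gt T_pos), one_mul,
    zero_add, rpow_TQ (by linarith : (0:ℝ) ≤ 1 - b)]
  exact xs_aux (le_of_lt S_gt_one) hb0 hb1

lemma Mf_bot {a : ℝ} (ha0 : 0 ≤ a) (ha1 : a ≤ 1) : Mf a 0 ≤ 1 := by
  unfold Mf
  rw [mul_zero, Real.zero_rpow (ne_of_gt S_pos), mul_zero,
    Real.zero_rpow (ne_of_gt T_pos), sub_zero, mul_one, zero_add, zero_add,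
    rpow_TQ ha0]
  exact Real.rpow_le_one ha0 ha1 (le_of_lt S_pos)

lemma Mf_top {a : ℝ} (ha0 : 0 ≤ a) (ha1 : a ≤ 1) : Mf a 1 ≤ 1 := by
  unfold Mf
  rw [mul_one, sub_self, mul_zero, Real.zero_rpow (ne_of_gt T_pos), mul_one,
    add_zero, rpow_TQ (by linarith : (0:ℝ) ≤ 1 - a)]
  exact xs_aux (le_of_lt S_gt_one) ha0 ha1

lemma Mf_diag {a : ℝ} (ha0 : 0 ≤ a) (ha1 : a ≤ 1) : Mf a a ≤ 1 := by
  unfold Mf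
  have h1 : (a*a)^S = a^(2*S) := by
    rw [show a*a = a^(2:ℕ) by ring, ← Real.rpow_natCast a 2,
      ← Real.rpow_mul ha0]
    norm_num
  have h2 : ((1-a)*a)^T + (a*(1-a))^T = 2*(a*(1-a))^T := by
    rw [mul_comm (1-a) a]; ring
  have h3 : (2*(a*(1-a))^T)^Q = 2^Q * (a*(1-a))^S := by
    rw [Real.mul_rpow (by norm_num) (Real.rpow_nonneg (by nlinarith) T),
      rpow_TQ (by nlinarith : (0:ℝ) ≤ a*(1-a))]
  rw [h1, h2, h3]
  exact psi_le_one ha0 ha1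

set_option maxHeartbeats 1000000 in
lemma val_reduce {x y : ℝ} (hx0 : 0 < x) (hx1 : x < 1) (hy0 : 0 < y) (hy1 : y < 1)
    (hyx : y < x)
    (hrel : x * (x*(1-y))^(T-1) = y * ((1-x)*y)^(T-1)) :
    (x * (x*(1-y))^(T-1))^Q * ((1-x)+(1-y))^(Q-1) ≤ 1 := by
  have hxy0 : 0 < x*(1-y) := mul_pos hx0 (by linarith)
  have hw : (0:ℝ) < (x*(1-y))^(T-1) := Real.rpow_pos_of_pos hxy0 _
  have hsum0 : (0:ℝ) < (1-x)+(1-y) := by linarith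
  have h1 : (x * (x*(1-y))^(T-1))^Q = x^S * x * (x*(1-y))⁻¹ := by
    rw [Real.mul_rpow (le_of_lt hx0) (le_of_lt hw),
      ← Real.rpow_mul (le_of_lt hxy0), Tm1_Q, Real.rpow_neg_one]
    congr 1
    rw [show Q = S + 1 from rfl, Real.rpow_add_one (ne_of_gt hx0)]
  rw [h1, Q_sub_one]
  have h2 : x^S * x * (x*(1-y))⁻¹ * ((1-x)+(1-y))^S
      = (x*((1-x)+(1-y)))^S / (1-y) := by
    rw [Real.mul_rpow (le_of_lt hx0) (le_of_lt hsum0)]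
    field_simp [ne_of_gt hxy0, ne_of_gt (show (0:ℝ) < 1-y by linarith)]
  rw [h2, div_le_one (by linarith : (0:ℝ) < 1-y)]
  exact crit_case hx0 hx1 hy0 hy1 hyx hrel

set_option maxHeartbeats 1000000 in
lemma Mf_crit {a b : ℝ} (ha0 : 0 < a) (ha1 : a < 1) (hb0 : 0 < b) (hb1 : b < 1)
    (hne : a ≠ b)
    (hE1 : S*b*(a*b)^(S-1) + (T*(1-b)*(a*(1-b))^(T-1) - T*b*((1-a)*b)^(T-1))
      * (Q * (((1-a)*b)^T + (a*(1-b))^T)^(Q-1)) = 0)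
    (hE2 : S*a*(a*b)^(S-1) + (T*(1-a)*((1-a)*b)^(T-1) - T*a*(a*(1-b))^(T-1))
      * (Q * (((1-a)*b)^T + (a*(1-b))^T)^(Q-1)) = 0) :
    Mf a b ≤ 1 := by
  have h1a : (0:ℝ) < 1 - a := by linarith
  have h1b : (0:ℝ) < 1 - b := by linarith
  have hab0 : 0 < (1-a)*b := mul_pos h1a hb0
  have hba0 : 0 < a*(1-b) := mul_pos ha0 h1b
  set w1 : ℝ := ((1-a)*b)^(T-1) with hw1def
  set w2 : ℝ := (a*(1-b))^(T-1) with hw2def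
  set B : ℝ := ((1-a)*b)^T + (a*(1-b))^T with hBdef
  have hw10 : 0 < w1 := Real.rpow_pos_of_pos hab0 _
  have hw20 : 0 < w2 := Real.rpow_pos_of_pos hba0 _
  have hB0 : 0 < B := by
    have := Real.rpow_pos_of_pos hab0 T
    have := Real.rpow_pos_of_pos hba0 T
    rw [hBdef]; positivity
  set BQ : ℝ := B^(Q-1) with hBQdef
  have hBQ0 : 0 < BQ := Real.rpow_pos_of_pos hB0 _
  set Pm : ℝ := (a*b)^(S-1) with hPmdef
  -- the conjugate relation
  have hTQB : T*Q*BQ ≠ 0 :=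
    ne_of_gt (mul_pos (mul_pos T_pos Q_pos) hBQ0)
  have hD : a*w2 = b*w1 := by
    have h1 : T*Q*BQ*(a*w2 - b*w1) = 0 := by
      linear_combination a*hE1 - b*hE2
    have h2 := (mul_eq_zero.1 h1).resolve_left hTQB
    linarith
  -- B splits
  have hBsplit : B = ((1-a)*b)*w1 + (a*(1-b))*w2 := by
    rw [hBdef, hw1def, hw2def]
    congr 1
    · nth_rewrite 1 [show T = (T-1)+1 by ring]
      rw [Real.rpow_add_one (ne_of_gt hab0)]; ring
    · nth_rewrite 1 [show T = (T-1)+1 by ring]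
      rw [Real.rpow_add_one (ne_of_gt hba0)]; ring
  have hBD : B = (a*w2)*((1-a)+(1-b)) := by
    rw [hBsplit]
    linear_combination (1-a)*hD.symm
  have hBD' : B = (b*w1)*((1-a)+(1-b)) := by
    rw [hBD, hD]
  -- magnitude relation
  have hMag : S*((a*b)*Pm) = T*Q*BQ*((a*w2)*(a+b-1)) := by
    linear_combination a*hE1 - (T*Q*BQ*a)*hD
  have hab_s : (a*b)^S = (a*b)*Pm := by
    rw [hPmdef]
    nth_rewrite 1 [show S = (S-1)+1 by ring]
    rw [Real.rpow_add_one (ne_of_gt (mul_pos ha0 hb0))]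
    ring
  have hBq : B^Q = BQ*B := by
    rw [hBQdef]
    nth_rewrite 1 [show Q = (Q-1)+1 by ring]
    rw [Real.rpow_add_one (ne_of_gt hB0)]
  have hMagS : (a*b)*Pm = BQ*((a*w2)*(a+b-1)) := by
    apply mul_left_cancel₀ (ne_of_gt S_pos)
    rw [hMag, ← TQ]; ring
  have hMfval : Mf a b = BQ*(a*w2) := by
    have hMfeq : Mf a b = (a*b)^S + B^Q := rfl
    rw [hMfeq, hab_s, hBq, hMagS]
    rw [hBD]
    ring
  rcases lt_or_gt_of_ne hne with hlt | hgt
  · -- a < b : use the (b*w1) form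
    have hMfval2 : Mf a b = (b*w1)^Q * ((1-a)+(1-b))^(Q-1) := by
      rw [hMfval, hD, hBQdef, hBD']
      rw [Real.mul_rpow (le_of_lt (mul_pos hb0 hw10)) (by linarith : (0:ℝ) ≤ (1-a)+(1-b))]
      nth_rewrite 3 [show Q = (Q-1)+1 by ring]
      rw [Real.rpow_add_one (ne_of_gt (mul_pos hb0 hw10))]
      ring
    have hD' := hD
    rw [hw1def, hw2def] at hD'
    have hrel' : b * (b*(1-a))^(T-1) = a * ((1-b)*a)^(T-1) := by
      rw [show b*(1-a) = (1-a)*b from mul_comm _ _,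
        show (1-b)*a = a*(1-b) from mul_comm _ _]
      exact hD'.symm
    have hv := val_reduce hb0 hb1 ha0 ha1 hlt hrel'
    rw [hMfval2, hw1def, show (1-a)*b = b*(1-a) from mul_comm _ _,
      show (1-a)+(1-b) = (1-b)+(1-a) from add_comm _ _]
    exact hv
  · -- b < a : use the (a*w2) form
    have hMfval2 : Mf a b = (a*w2)^Q * ((1-a)+(1-b))^(Q-1) := by
      rw [hMfval, hBQdef, hBD]
      rw [Real.mul_rpow (le_of_lt (mul_pos ha0 hw20)) (by linarith : (0:ℝ) ≤ (1-a)+(1-b))]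
      nth_rewrite 3 [show Q = (Q-1)+1 by ring]
      rw [Real.rpow_add_one (ne_of_gt (mul_pos ha0 hw20))]
      ring
    rw [hMfval2, hw2def]
    exact val_reduce ha0 ha1 hb0 hb1 hgt (by rw [← hw2def, ← hw1def]; exact hD)

lemma Mf_continuous : Continuous (fun p : ℝ×ℝ => Mf p.1 p.2) := by
  unfold Mf
  have c1 : Continuous (fun p : ℝ×ℝ => (p.1*p.2) ^ S) :=
    (continuous_fst.mul continuous_snd).rpow_const (fun p => Or.inr (le_of_lt S_pos))
  have c2 : Continuous (fun p : ℝ×ℝ => ((1-p.1)*p.2) ^ T) :=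
    ((continuous_const.sub continuous_fst).mul continuous_snd).rpow_const
      (fun p => Or.inr (le_of_lt T_pos))
  have c3 : Continuous (fun p : ℝ×ℝ => (p.1*(1-p.2)) ^ T) :=
    (continuous_fst.mul (continuous_const.sub continuous_snd)).rpow_const
      (fun p => Or.inr (le_of_lt T_pos))
  exact c1.add ((c2.add c3).rpow_const (fun p => Or.inr (le_of_lt Q_pos)))

set_option maxHeartbeats 1000000 in
lemma Mf_hasDeriv1 {a b : ℝ} (ha0 : 0 < a) (ha1 : a < 1) (hb0 : 0 < b) (hb1 : b < 1) :
    HasDerivAt (fun u => Mf u b)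
      (S*b*(a*b)^(S-1) + (T*(1-b)*(a*(1-b))^(T-1) - T*b*((1-a)*b)^(T-1))
        * (Q * (((1-a)*b)^T + (a*(1-b))^T)^(Q-1))) a := by
  have h1a : (0:ℝ) < 1 - a := by linarith
  have h1b : (0:ℝ) < 1 - b := by linarith
  have hab0 : 0 < (1-a)*b := mul_pos h1a hb0
  have hba0 : 0 < a*(1-b) := mul_pos ha0 h1b
  have hB0 : 0 < ((1-a)*b)^T + (a*(1-b))^T := by
    have := Real.rpow_pos_of_pos hab0 T
    have := Real.rpow_pos_of_pos hba0 T
    positivity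
  have p1 : HasDerivAt (fun u : ℝ => (u*b)^S) ((1*b) * S * (a*b)^(S-1)) a :=
    ((hasDerivAt_id a).mul_const b).rpow_const (Or.inl (ne_of_gt (mul_pos ha0 hb0)))
  have p2a : HasDerivAt (fun u : ℝ => ((1-u)*b)^T) ((-1*b) * T * ((1-a)*b)^(T-1)) a :=
    (((hasDerivAt_id a).const_sub 1).mul_const b).rpow_const (Or.inl (ne_of_gt hab0))
  have p2b : HasDerivAt (fun u : ℝ => (u*(1-b))^T) ((1*(1-b)) * T * (a*(1-b))^(T-1)) a :=
    ((hasDerivAt_id a).mul_const (1-b)).rpow_const (Or.inl (ne_of_gt hba0))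
  have p3 := (p2a.add p2b).rpow_const (p := Q) (Or.inl (ne_of_gt hB0))
  have p4 := p1.add p3
  have : (fun u : ℝ => (u*b)^S + (((1-u)*b)^T + (u*(1-b))^T)^Q)
      = (fun u => Mf u b) := by
    funext u; rfl
  simp only [Pi.add_apply] at p4
  have p5 : HasDerivAt (fun u => Mf u b) _ a := p4
  convert p5 using 1
  ring

set_option maxHeartbeats 1000000 in
lemma Mf_hasDeriv2 {a b : ℝ} (ha0 : 0 < a) (ha1 : a < 1) (hb0 : 0 < b) (hb1 : b < 1) :
    HasDerivAt (fun v => Mf a v)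
      (S*a*(a*b)^(S-1) + (T*(1-a)*((1-a)*b)^(T-1) - T*a*(a*(1-b))^(T-1))
        * (Q * (((1-a)*b)^T + (a*(1-b))^T)^(Q-1))) b := by
  have h1a : (0:ℝ) < 1 - a := by linarith
  have h1b : (0:ℝ) < 1 - b := by linarith
  have hab0 : 0 < (1-a)*b := mul_pos h1a hb0
  have hba0 : 0 < a*(1-b) := mul_pos ha0 h1b
  have hB0 : 0 < ((1-a)*b)^T + (a*(1-b))^T := by
    have := Real.rpow_pos_of_pos hab0 T
    have := Real.rpow_pos_of_pos hba0 T
    positivity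
  have p1 : HasDerivAt (fun v : ℝ => (a*v)^S) ((a*1) * S * (a*b)^(S-1)) b :=
    ((hasDerivAt_id b).const_mul a).rpow_const (Or.inl (ne_of_gt (mul_pos ha0 hb0)))
  have p2a : HasDerivAt (fun v : ℝ => ((1-a)*v)^T) (((1-a)*1) * T * ((1-a)*b)^(T-1)) b :=
    ((hasDerivAt_id b).const_mul (1-a)).rpow_const (Or.inl (ne_of_gt hab0))
  have p2b : HasDerivAt (fun v : ℝ => (a*(1-v))^T) ((a*(-1)) * T * (a*(1-b))^(T-1)) b :=
    (((hasDerivAt_id b).const_sub 1).const_mul a).rpow_const (Or.inl (ne_of_gt hba0))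
  have p3 := (p2a.add p2b).rpow_const (p := Q) (Or.inl (ne_of_gt hB0))
  have p4 := p1.add p3
  have : (fun v : ℝ => (a*v)^S + (((1-a)*v)^T + (a*(1-v))^T)^Q)
      = (fun v => Mf a v) := by
    funext v; rfl
  simp only [Pi.add_apply] at p4
  have p5 : HasDerivAt (fun v => Mf a v) _ b := p4
  convert p5 using 1
  ring

set_option maxHeartbeats 1000000 in
lemma M_le_one {a b : ℝ} (ha0 : 0 ≤ a) (ha1 : a ≤ 1) (hb0 : 0 ≤ b) (hb1 : b ≤ 1) :
    Mf a b ≤ 1 := by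
  have hK : IsCompact (Set.Icc ((0:ℝ),(0:ℝ)) ((1:ℝ),(1:ℝ))) := isCompact_Icc
  obtain ⟨p0, hp0, hmax⟩ := hK.exists_isMaxOn
    ⟨((0:ℝ),(0:ℝ)), Set.mem_Icc.2 ⟨le_refl _, Prod.mk_le_mk.2 ⟨zero_le_one, zero_le_one⟩⟩⟩
    Mf_continuous.continuousOn
  rw [isMaxOn_iff] at hmax
  obtain ⟨a0, b0⟩ := p0
  rw [Set.mem_Icc, Prod.mk_le_mk, Prod.mk_le_mk] at hp0
  obtain ⟨⟨ha00, hb00⟩, ⟨ha01, hb01⟩⟩ := hp0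
  have hmem : ((a,b) : ℝ×ℝ) ∈ Set.Icc ((0:ℝ),(0:ℝ)) ((1:ℝ),(1:ℝ)) :=
    Set.mem_Icc.2 ⟨Prod.mk_le_mk.2 ⟨ha0, hb0⟩, Prod.mk_le_mk.2 ⟨ha1, hb1⟩⟩
  have hle : Mf a b ≤ Mf a0 b0 := hmax (a,b) hmem
  suffices hs : Mf a0 b0 ≤ 1 by linarith
  rcases eq_or_lt_of_le ha00 with h | ha00' 
  · rw [← h]; exact Mf_left hb00 hb01
  rcases eq_or_lt_of_le ha01 with h | ha01'
  · rw [h]; exact Mf_right hb00 hb01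
  rcases eq_or_lt_of_le hb00 with h | hb00'
  · rw [← h]; exact Mf_bot (le_of_lt ha00') (le_of_lt ha01')
  rcases eq_or_lt_of_le hb01 with h | hb01'
  · rw [h]; exact Mf_top (le_of_lt ha00') (le_of_lt ha01')
  by_cases hne : a0 = b0
  · rw [hne]; exact Mf_diag hb00 hb01
  -- interior critical point
  have hloc1 : IsLocalMax (fun u => Mf u b0) a0 := by
    have hnhds : Set.Ioo (0:ℝ) 1 ∈ nhds a0 := Ioo_mem_nhds ha00' ha01'
    filter_upwards [hnhds] with u hu
    exact hmax (u, b0) (Set.mem_Icc.2 ⟨Prod.mk_le_mk.2 ⟨le_of_lt hu.1, hb00⟩,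
      Prod.mk_le_mk.2 ⟨le_of_lt hu.2, hb01⟩⟩)
  have hloc2 : IsLocalMax (fun v => Mf a0 v) b0 := by
    have hnhds : Set.Ioo (0:ℝ) 1 ∈ nhds b0 := Ioo_mem_nhds hb00' hb01'
    filter_upwards [hnhds] with v hv
    exact hmax (a0, v) (Set.mem_Icc.2 ⟨Prod.mk_le_mk.2 ⟨le_of_lt ha00', le_of_lt hv.1⟩,
      Prod.mk_le_mk.2 ⟨le_of_lt ha01', le_of_lt hv.2⟩⟩)
  have hE1 := hloc1.hasDerivAt_eq_zero (Mf_hasDeriv1 ha00' ha01' hb00' hb01')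
  have hE2 := hloc2.hasDerivAt_eq_zero (Mf_hasDeriv2 ha00' ha01' hb00' hb01')
  exact Mf_crit ha00' ha01' hb00' hb01' hne hE1 hE2

/-- The three-variable normalized inequality. -/
lemma F_le_one {u₁ u₂ u₃ : ℝ} (h₁0 : 0 ≤ u₁) (h₁1 : u₁ ≤ 1) (h₂0 : 0 ≤ u₂)
    (h₂1 : u₂ ≤ 1) (h₃0 : 0 ≤ u₃) (h₃1 : u₃ ≤ 1) :
    (u₁*u₂*u₃) ^ T + ((1-u₁)*u₂*(1-u₃)) ^ T + (u₁*(1-u₂)*(1-u₃)) ^ T ≤ 1 := by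
  have h3' : (0:ℝ) ≤ 1 - u₃ := by linarith
  have h1' : (0:ℝ) ≤ 1 - u₁ := by linarith
  have h2' : (0:ℝ) ≤ 1 - u₂ := by linarith
  set X : ℝ := (u₁*u₂)^T with hX
  set Y : ℝ := ((1-u₁)*u₂)^T + (u₁*(1-u₂))^T with hY
  have hXpos : 0 ≤ X := Real.rpow_nonneg (by positivity) _
  have hYpos : 0 ≤ Y :=
    add_nonneg (Real.rpow_nonneg (by positivity) _) (Real.rpow_nonneg (by positivity) _)
  have e1 : (u₁*u₂*u₃) ^ T = u₃^T * X := by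
    rw [hX, ← Real.mul_rpow h₃0 (by positivity), mul_comm u₃ (u₁*u₂)]
  have e2 : ((1-u₁)*u₂*(1-u₃)) ^ T = (1-u₃)^T * ((1-u₁)*u₂)^T := by
    rw [← Real.mul_rpow h3' (by positivity), mul_comm (1-u₃) ((1-u₁)*u₂)]
  have e3 : (u₁*(1-u₂)*(1-u₃)) ^ T = (1-u₃)^T * (u₁*(1-u₂))^T := by
    rw [← Real.mul_rpow h3' (by positivity), mul_comm (1-u₃) (u₁*(1-u₂))]
  rw [e1, e2, e3]
  have hH := holder2 (x := u₃) (y := 1-u₃) h₃0 h3' hXpos hYpos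
  have hXQ : X^Q = (u₁*u₂)^S := by rw [hX, rpow_TQ (by positivity)]
  have hMf : X^Q + Y^Q = Mf u₁ u₂ := by rw [hXQ, hY]; rfl
  have hMf0 : 0 ≤ Mf u₁ u₂ := by
    rw [← hMf]
    exact add_nonneg (Real.rpow_nonneg hXpos _) (Real.rpow_nonneg hYpos _)
  have hfin : (X^Q + Y^Q)^(1-T) ≤ 1 := by
    rw [hMf]
    exact Real.rpow_le_one hMf0 (M_le_one h₁0 h₁1 h₂0 h₂1) (by linarith [T_lt_one])
  calc u₃^T*X + (1-u₃)^T*((1-u₁)*u₂)^T + (1-u₃)^T*(u₁*(1-u₂))^T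
      = u₃^T*X + (1-u₃)^T*Y := by rw [hY]; ring
    _ ≤ (u₃+(1-u₃))^T * (X^Q+Y^Q)^(1-T) := hH
    _ = (X^Q+Y^Q)^(1-T) := by norm_num
    _ ≤ 1 := hfin

/-- The six-variable Kane–Tao inequality. -/
lemma six_var {a₁ a₂ a₃ b₁ b₂ b₃ : ℝ} (ha₁ : 0 ≤ a₁) (ha₂ : 0 ≤ a₂) (ha₃ : 0 ≤ a₃)
    (hb₁ : 0 ≤ b₁) (hb₂ : 0 ≤ b₂) (hb₃ : 0 ≤ b₃) :
    (a₁*a₂*a₃) ^ T + (b₁*a₂*b₃) ^ T + (a₁*b₂*b₃) ^ T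
      ≤ ((a₁+b₁)*(a₂+b₂)*(a₃+b₃)) ^ T := by
  have key : ∀ i : Fin 3, True := fun _ => trivial
  rcases eq_or_lt_of_le (by positivity : (0:ℝ) ≤ a₁ + b₁) with h1 | h1
  · have ha : a₁ = 0 := by linarith
    have hb : b₁ = 0 := by linarith
    simp [ha, hb, Real.zero_rpow (ne_of_gt T_pos)]
  rcases eq_or_lt_of_le (by positivity : (0:ℝ) ≤ a₂ + b₂) with h2 | h2
  · have ha : a₂ = 0 := by linarith
    have hb : b₂ = 0 := by linarith
    simp [ha, hb, Real.zero_rpow (ne_of_gt T_pos)]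
  rcases eq_or_lt_of_le (by positivity : (0:ℝ) ≤ a₃ + b₃) with h3 | h3
  · have ha : a₃ = 0 := by linarith
    have hb : b₃ = 0 := by linarith
    simp [ha, hb, Real.zero_rpow (ne_of_gt T_pos)]
  set u₁ : ℝ := a₁/(a₁+b₁) with hu₁
  set u₂ : ℝ := a₂/(a₂+b₂) with hu₂
  set u₃ : ℝ := a₃/(a₃+b₃) with hu₃
  have hu₁0 : 0 ≤ u₁ := div_nonneg ha₁ (le_of_lt h1)
  have hu₂0 : 0 ≤ u₂ := div_nonneg ha₂ (le_of_lt h2)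
  have hu₃0 : 0 ≤ u₃ := div_nonneg ha₃ (le_of_lt h3)
  have hu₁1 : u₁ ≤ 1 := by rw [hu₁, div_le_one h1]; linarith
  have hu₂1 : u₂ ≤ 1 := by rw [hu₂, div_le_one h2]; linarith
  have hu₃1 : u₃ ≤ 1 := by rw [hu₃, div_le_one h3]; linarith
  have ea₁ : a₁ = u₁*(a₁+b₁) := by rw [hu₁]; field_simp
  have ea₂ : a₂ = u₂*(a₂+b₂) := by rw [hu₂]; field_simp
  have ea₃ : a₃ = u₃*(a₃+b₃) := by rw [hu₃]; field_simp
  have eb₁ : b₁ = (1-u₁)*(a₁+b₁) := by rw [hu₁]; field_simp; ring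
  have eb₂ : b₂ = (1-u₂)*(a₂+b₂) := by rw [hu₂]; field_simp; ring
  have eb₃ : b₃ = (1-u₃)*(a₃+b₃) := by rw [hu₃]; field_simp; ring
  have hP : (0:ℝ) ≤ (a₁+b₁)*((a₂+b₂)*(a₃+b₃)) := by positivity
  have h1u : (0:ℝ) ≤ 1-u₁ := by linarith
  have h2u : (0:ℝ) ≤ 1-u₂ := by linarith
  have h3u : (0:ℝ) ≤ 1-u₃ := by linarith
  have hx1 : (0:ℝ) ≤ u₁*u₂*u₃ := mul_nonneg (mul_nonneg hu₁0 hu₂0) hu₃0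
  have hx2 : (0:ℝ) ≤ (1-u₁)*u₂*(1-u₃) := mul_nonneg (mul_nonneg h1u hu₂0) h3u
  have hx3 : (0:ℝ) ≤ u₁*(1-u₂)*(1-u₃) := mul_nonneg (mul_nonneg hu₁0 h2u) h3u
  have t1 : (a₁*a₂*a₃)^T = (u₁*u₂*u₃)^T * ((a₁+b₁)*((a₂+b₂)*(a₃+b₃)))^T := by
    rw [← Real.mul_rpow (by positivity) hP]
    congr 1
    nth_rewrite 1 [ea₁, ea₂, ea₃]
    ring
  have t2 : (b₁*a₂*b₃)^T = ((1-u₁)*u₂*(1-u₃))^T * ((a₁+b₁)*((a₂+b₂)*(a₃+b₃)))^T := by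
    rw [← Real.mul_rpow hx2 hP]
    congr 1
    nth_rewrite 1 [eb₁, ea₂, eb₃]
    ring
  have t3 : (a₁*b₂*b₃)^T = (u₁*(1-u₂)*(1-u₃))^T * ((a₁+b₁)*((a₂+b₂)*(a₃+b₃)))^T := by
    rw [← Real.mul_rpow hx3 hP]
    congr 1
    nth_rewrite 1 [ea₁, eb₂, eb₃]
    ring
  have hgoal : ((a₁+b₁)*(a₂+b₂)*(a₃+b₃))^T = ((a₁+b₁)*((a₂+b₂)*(a₃+b₃)))^T := by
    rw [mul_assoc]
  rw [t1, t2, t3, hgoal]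
  have hF := F_le_one hu₁0 hu₁1 hu₂0 hu₂1 hu₃0 hu₃1
  have hPT : (0:ℝ) ≤ ((a₁+b₁)*((a₂+b₂)*(a₃+b₃)))^T := Real.rpow_nonneg hP _
  set P : ℝ := ((a₁+b₁)*((a₂+b₂)*(a₃+b₃)))^T
  calc (u₁*u₂*u₃)^T*P + ((1-u₁)*u₂*(1-u₃))^T*P + (u₁*(1-u₂)*(1-u₃))^T*P
      = ((u₁*u₂*u₃)^T + ((1-u₁)*u₂*(1-u₃))^T + (u₁*(1-u₂)*(1-u₃))^T)*P := by ring
    _ ≤ 1*P := mul_le_mul_of_nonneg_right hF hPT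
    _ = P := one_mul P

/-! ### Combinatorics -/

def trip (X₁ X₂ X₃ : Finset (Finset ℕ)) : Finset (Finset ℕ × Finset ℕ × Finset ℕ) :=
  (X₁ ×ˢ X₂ ×ˢ X₃).filter (fun p => Disjoint p.1 p.2.1 ∧ p.1 ∪ p.2.1 = p.2.2)

lemma mem_trip {X₁ X₂ X₃ : Finset (Finset ℕ)} {p : Finset ℕ × Finset ℕ × Finset ℕ} :
    p ∈ trip X₁ X₂ X₃ ↔ p.1 ∈ X₁ ∧ p.2.1 ∈ X₂ ∧ p.2.2 ∈ X₃ ∧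
      Disjoint p.1 p.2.1 ∧ p.1 ∪ p.2.1 = p.2.2 := by
  unfold trip
  rw [Finset.mem_filter, Finset.mem_product, Finset.mem_product]
  tauto

lemma trip_card_le (n : ℕ) : ∀ (X₁ X₂ X₃ : Finset (Finset ℕ)),
    (∀ A ∈ X₁, A ⊆ Finset.range n) → (∀ A ∈ X₂, A ⊆ Finset.range n) →
    (∀ A ∈ X₃, A ⊆ Finset.range n) →
    ((trip X₁ X₂ X₃).card : ℝ) ≤ ((X₁.card : ℝ) * X₂.card * X₃.card) ^ T := by
  induction n with
  | zero =>
    intro X₁ X₂ X₃ h₁ h₂ h₃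
    rcases Finset.eq_empty_or_nonempty (trip X₁ X₂ X₃) with he | hne
    · rw [he]
      simp only [Finset.card_empty, Nat.cast_zero]
      positivity
    · obtain ⟨p, hp⟩ := hne
      rw [mem_trip] at hp
      have hsub : ∀ (Y : Finset (Finset ℕ)), (∀ A ∈ Y, A ⊆ Finset.range 0) →
          Y.card ≤ 1 := by
        intro Y hY
        apply Finset.card_le_one.2
        intro u hu v hv
        have hu' : u = ∅ := Finset.subset_empty.1 (by simpa using hY u hu)
        have hv' : v = ∅ := Finset.subset_empty.1 (by simpa using hY v hv)
        rw [hu', hv']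
      have hc1 : 1 ≤ X₁.card := Finset.card_pos.2 ⟨p.1, hp.1⟩
      have hc2 : 1 ≤ X₂.card := Finset.card_pos.2 ⟨p.2.1, hp.2.1⟩
      have hc3 : 1 ≤ X₃.card := Finset.card_pos.2 ⟨p.2.2, hp.2.2.1⟩
      have hL : (trip X₁ X₂ X₃).card ≤ 1 := by
        calc (trip X₁ X₂ X₃).card ≤ (X₁ ×ˢ X₂ ×ˢ X₃).card :=
              Finset.card_le_card (Finset.filter_subset _ _)
          _ = X₁.card * (X₂.card * X₃.card) := by
              rw [Finset.card_product, Finset.card_product]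
          _ ≤ 1 := by
              have h23 := Nat.mul_le_mul (hsub X₂ h₂) (hsub X₃ h₃)
              have h123 := Nat.mul_le_mul (hsub X₁ h₁) h23
              simpa using h123
      have hR : (1:ℝ) ≤ ((X₁.card : ℝ) * X₂.card * X₃.card) ^ T := by
        have hbase : (1:ℝ) ≤ (X₁.card : ℝ) * X₂.card * X₃.card := by
          have c1 : (1:ℝ) ≤ (X₁.card : ℝ) := by exact_mod_cast hc1
          have c2 : (1:ℝ) ≤ (X₂.card : ℝ) := by exact_mod_cast hc2
          have c3 : (1:ℝ) ≤ (X₃.card : ℝ) := by exact_mod_cast hc3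
          have h12 : (1:ℝ) ≤ (X₁.card : ℝ) * X₂.card := by nlinarith
          nlinarith
        calc (1:ℝ) = 1 ^ T := (Real.one_rpow T).symm
          _ ≤ _ := Real.rpow_le_rpow (by norm_num) hbase (le_of_lt T_pos)
      calc ((trip X₁ X₂ X₃).card : ℝ) ≤ 1 := by exact_mod_cast hL
        _ ≤ _ := hR
  | succ n ih =>
    intro X₁ X₂ X₃ h₁ h₂ h₃
    classical
    set Y₁ := X₁.filter (fun A => n ∉ A) with hY₁
    set Y₂ := X₂.filter (fun A => n ∉ A) with hY₂
    set Y₃ := X₃.filter (fun A => n ∉ A) with hY₃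
    set Z₁ := (X₁.filter (fun A => n ∈ A)).image (fun A => A.erase n) with hZ₁
    set Z₂ := (X₂.filter (fun A => n ∈ A)).image (fun A => A.erase n) with hZ₂
    set Z₃ := (X₃.filter (fun A => n ∈ A)).image (fun A => A.erase n) with hZ₃
    have hinj : ∀ (X : Finset (Finset ℕ)),
        Set.InjOn (fun A : Finset ℕ => A.erase n)
          ↑(X.filter (fun A => n ∈ A)) := by
      intro X A hA B hB hAB
      simp only [Finset.coe_filter, Set.mem_setOf_eq] at hA hB
      have hAB' : A.erase n = B.erase n := hAB
      have : insert n (A.erase n) = insert n (B.erase n) := by rw [hAB']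
      rwa [Finset.insert_erase hA.2, Finset.insert_erase hB.2] at this
    have hcardZ : ∀ (X : Finset (Finset ℕ)),
        ((X.filter (fun A => n ∈ A)).image (fun A => A.erase n)).card
          = (X.filter (fun A => n ∈ A)).card := by
      intro X; exact Finset.card_image_of_injOn (hinj X)
    have hcardsum : ∀ (X : Finset (Finset ℕ)),
        X.card = (X.filter (fun A => n ∉ A)).card
          + ((X.filter (fun A => n ∈ A)).image (fun A => A.erase n)).card := by
      intro X
      rw [hcardZ X]
      rw [← Finset.card_filter_add_card_filter_not (s := X) (p := fun A => n ∈ A)]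
      ring
    -- subset facts for the sub families
    have hYsub : ∀ (X : Finset (Finset ℕ)), (∀ A ∈ X, A ⊆ Finset.range (n+1)) →
        ∀ A ∈ X.filter (fun A => n ∉ A), A ⊆ Finset.range n := by
      intro X hX A hA x hx
      rw [Finset.mem_filter] at hA
      have := hX A hA.1 hx
      rw [Finset.mem_range] at this ⊢
      rcases Nat.lt_succ_iff_lt_or_eq.1 this with h | h
      · exact h
      · exact absurd (h ▸ hx) hA.2
    have hZsub : ∀ (X : Finset (Finset ℕ)), (∀ A ∈ X, A ⊆ Finset.range (n+1)) →
        ∀ B ∈ (X.filter (fun A => n ∈ A)).image (fun A => A.erase n),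
          B ⊆ Finset.range n := by
      intro X hX B hB x hx
      rw [Finset.mem_image] at hB
      obtain ⟨A, hA, rfl⟩ := hB
      rw [Finset.mem_filter] at hA
      have hx' := Finset.mem_of_mem_erase hx
      have hxn := Finset.ne_of_mem_erase hx
      have := hX A hA.1 hx'
      rw [Finset.mem_range] at this ⊢
      omega
    -- split the triple set
    set T0 := (trip X₁ X₂ X₃).filter (fun p => n ∉ p.2.2) with hT0
    set T1 := (trip X₁ X₂ X₃).filter (fun p => n ∈ p.1) with hT1
    set T2 := (trip X₁ X₂ X₃).filter (fun p => n ∈ p.2.1) with hT2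
    have hcover : trip X₁ X₂ X₃ ⊆ T0 ∪ (T1 ∪ T2) := by
      intro p hp
      rw [Finset.mem_union, Finset.mem_union, hT0, hT1, hT2,
        Finset.mem_filter, Finset.mem_filter, Finset.mem_filter]
      by_cases h : n ∈ p.2.2
      · right
        have hp' := (mem_trip).1 hp
        rw [← hp'.2.2.2.2, Finset.mem_union] at h
        rcases h with h | h
        · exact Or.inl ⟨hp, h⟩
        · exact Or.inr ⟨hp, h⟩
      · exact Or.inl ⟨hp, h⟩
    have hsplit : (trip X₁ X₂ X₃).card ≤ T0.card + (T1.card + T2.card) := by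
      calc (trip X₁ X₂ X₃).card ≤ (T0 ∪ (T1 ∪ T2)).card := Finset.card_le_card hcover
        _ ≤ T0.card + (T1 ∪ T2).card := Finset.card_union_le _ _
        _ ≤ T0.card + (T1.card + T2.card) := by
            have := Finset.card_union_le T1 T2
            omega
    -- bound each piece
    have hb0 : T0.card ≤ (trip Y₁ Y₂ Y₃).card := by
      apply Finset.card_le_card
      intro p hp
      rw [hT0, Finset.mem_filter, mem_trip] at hp
      obtain ⟨⟨hm1, hm2, hm3, hdisj, hun⟩, hn⟩ := hp
      have hn1 : n ∉ p.1 := fun h => hn (hun ▸ Finset.mem_union_left _ h)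
      have hn2 : n ∉ p.2.1 := fun h => hn (hun ▸ Finset.mem_union_right _ h)
      rw [mem_trip]
      exact ⟨Finset.mem_filter.2 ⟨hm1, hn1⟩, Finset.mem_filter.2 ⟨hm2, hn2⟩,
        Finset.mem_filter.2 ⟨hm3, hn⟩, hdisj, hun⟩
    have hb1 : T1.card ≤ (trip Z₁ Y₂ Z₃).card := by
      apply Finset.card_le_card_of_injOn
        (fun p => (p.1.erase n, p.2.1, p.2.2.erase n))
      · intro p hp
        rw [Finset.mem_coe, hT1, Finset.mem_filter, mem_trip] at hp
        obtain ⟨⟨hm1, hm2, hm3, hdisj, hun⟩, hn⟩ := hp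
        have hn2 : n ∉ p.2.1 := Finset.disjoint_left.1 hdisj hn
        have hn3 : n ∈ p.2.2 := hun ▸ Finset.mem_union_left _ hn
        rw [Finset.mem_coe, mem_trip]
        refine ⟨?_, Finset.mem_filter.2 ⟨hm2, hn2⟩, ?_, ?_, ?_⟩
        · exact Finset.mem_image.2 ⟨p.1, Finset.mem_filter.2 ⟨hm1, hn⟩, rfl⟩
        · exact Finset.mem_image.2 ⟨p.2.2, Finset.mem_filter.2 ⟨hm3, hn3⟩, rfl⟩
        · exact hdisj.mono_left (Finset.erase_subset _ _)
        · dsimp only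
          rw [← hun, Finset.erase_union_distrib,
            Finset.erase_eq_of_notMem hn2]
      · intro p hp q hq he
        rw [Finset.mem_coe, hT1, Finset.mem_filter, mem_trip] at hp hq
        obtain ⟨⟨_, _, _, _, hunp⟩, hnp⟩ := hp
        obtain ⟨⟨_, _, _, _, hunq⟩, hnq⟩ := hq
        have hn3p : n ∈ p.2.2 := hunp ▸ Finset.mem_union_left _ hnp
        have hn3q : n ∈ q.2.2 := hunq ▸ Finset.mem_union_left _ hnq
        have he' : (p.1.erase n, p.2.1, p.2.2.erase n)
            = (q.1.erase n, q.2.1, q.2.2.erase n) := he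
        obtain ⟨e1, e23⟩ := Prod.mk.inj he'
        obtain ⟨e2, e3⟩ := Prod.mk.inj e23
        have f1 : p.1 = q.1 := by
          have := congrArg (insert n) e1
          rwa [Finset.insert_erase hnp, Finset.insert_erase hnq] at this
        have f3 : p.2.2 = q.2.2 := by
          have := congrArg (insert n) e3
          rwa [Finset.insert_erase hn3p, Finset.insert_erase hn3q] at this
        exact Prod.ext f1 (Prod.ext e2 f3)
    have hb2 : T2.card ≤ (trip Y₁ Z₂ Z₃).card := by
      apply Finset.card_le_card_of_injOn
        (fun p => (p.1, p.2.1.erase n, p.2.2.erase n))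
      · intro p hp
        rw [Finset.mem_coe, hT2, Finset.mem_filter, mem_trip] at hp
        obtain ⟨⟨hm1, hm2, hm3, hdisj, hun⟩, hn⟩ := hp
        have hn1 : n ∉ p.1 := Finset.disjoint_right.1 hdisj hn
        have hn3 : n ∈ p.2.2 := hun ▸ Finset.mem_union_right _ hn
        rw [Finset.mem_coe, mem_trip]
        refine ⟨Finset.mem_filter.2 ⟨hm1, hn1⟩, ?_, ?_, ?_, ?_⟩
        · exact Finset.mem_image.2 ⟨p.2.1, Finset.mem_filter.2 ⟨hm2, hn⟩, rfl⟩
        · exact Finset.mem_image.2 ⟨p.2.2, Finset.mem_filter.2 ⟨hm3, hn3⟩, rfl⟩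
        · exact hdisj.mono_right (Finset.erase_subset _ _)
        · dsimp only
          rw [← hun, Finset.erase_union_distrib,
            Finset.erase_eq_of_notMem hn1]
      · intro p hp q hq he
        rw [Finset.mem_coe, hT2, Finset.mem_filter, mem_trip] at hp hq
        obtain ⟨⟨_, _, _, _, hunp⟩, hnp⟩ := hp
        obtain ⟨⟨_, _, _, _, hunq⟩, hnq⟩ := hq
        have hn3p : n ∈ p.2.2 := hunp ▸ Finset.mem_union_right _ hnp
        have hn3q : n ∈ q.2.2 := hunq ▸ Finset.mem_union_right _ hnq
        have he' : (p.1, p.2.1.erase n, p.2.2.erase n)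
            = (q.1, q.2.1.erase n, q.2.2.erase n) := he
        obtain ⟨e1, e23⟩ := Prod.mk.inj he'
        obtain ⟨e2, e3⟩ := Prod.mk.inj e23
        have f2 : p.2.1 = q.2.1 := by
          have := congrArg (insert n) e2
          rwa [Finset.insert_erase hnp, Finset.insert_erase hnq] at this
        have f3 : p.2.2 = q.2.2 := by
          have := congrArg (insert n) e3
          rwa [Finset.insert_erase hn3p, Finset.insert_erase hn3q] at this
        exact Prod.ext e1 (Prod.ext f2 f3)
    -- apply the induction hypothesis
    have ih0 := ih Y₁ Y₂ Y₃ (hYsub X₁ h₁) (hYsub X₂ h₂) (hYsub X₃ h₃)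
    have ih1 := ih Z₁ Y₂ Z₃ (hZsub X₁ h₁) (hYsub X₂ h₂) (hZsub X₃ h₃)
    have ih2 := ih Y₁ Z₂ Z₃ (hYsub X₁ h₁) (hZsub X₂ h₂) (hZsub X₃ h₃)
    have hsix := six_var (Nat.cast_nonneg Y₁.card) (Nat.cast_nonneg Y₂.card)
      (Nat.cast_nonneg Y₃.card) (Nat.cast_nonneg Z₁.card)
      (Nat.cast_nonneg Z₂.card) (Nat.cast_nonneg Z₃.card)
    have hX₁c : (X₁.card : ℝ) = (Y₁.card : ℝ) + Z₁.card := by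
      rw [hY₁, hZ₁]; exact_mod_cast congrArg Nat.cast (hcardsum X₁)
    have hX₂c : (X₂.card : ℝ) = (Y₂.card : ℝ) + Z₂.card := by
      rw [hY₂, hZ₂]; exact_mod_cast congrArg Nat.cast (hcardsum X₂)
    have hX₃c : (X₃.card : ℝ) = (Y₃.card : ℝ) + Z₃.card := by
      rw [hY₃, hZ₃]; exact_mod_cast congrArg Nat.cast (hcardsum X₃)
    calc ((trip X₁ X₂ X₃).card : ℝ)
        ≤ ((trip Y₁ Y₂ Y₃).card : ℝ) + ((trip Z₁ Y₂ Z₃).card : ℝ)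
          + ((trip Y₁ Z₂ Z₃).card : ℝ) := by
          have : (trip X₁ X₂ X₃).card ≤ (trip Y₁ Y₂ Y₃).card
              + (trip Z₁ Y₂ Z₃).card + (trip Y₁ Z₂ Z₃).card := by omega
          exact_mod_cast this
      _ ≤ ((Y₁.card:ℝ)*Y₂.card*Y₃.card)^T + ((Z₁.card:ℝ)*Y₂.card*Z₃.card)^T
          + ((Y₁.card:ℝ)*Z₂.card*Z₃.card)^T := by
          have := ih0; have := ih1; have := ih2
          linarith
      _ ≤ (((Y₁.card:ℝ)+Z₁.card)*((Y₂.card:ℝ)+Z₂.card)*((Y₃.card:ℝ)+Z₃.card))^T :=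
          hsix
      _ = ((X₁.card : ℝ) * X₂.card * X₃.card) ^ T := by
          rw [hX₁c, hX₂c, hX₃c]

end

end KT

theorem stmt_0 (X : Finset (Finset ℕ)) :
    (((X ×ˢ X ×ˢ X).filter
      (fun t => Disjoint t.1 t.2.1 ∧ t.1 ∪ t.2.1 = t.2.2)).card : ℝ)
      ≤ (X.card : ℝ) ^ (3 / (Real.log (27 / 4) / Real.log 3)) := by
  classical
  set m := X.sup (fun A => A.sup id) with hm
  have hb : ∀ A ∈ X, A ⊆ Finset.range (m+1) := by
    intro A hA x hx
    rw [Finset.mem_range, Nat.lt_succ_iff]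
    calc x = id x := rfl
      _ ≤ A.sup id := Finset.le_sup hx
      _ ≤ m := Finset.le_sup (f := fun A => A.sup id) hA
  have h := KT.trip_card_le (m+1) X X X hb hb hb
  have hexp : 3 * KT.T = 3 / (Real.log (27 / 4) / Real.log 3) := by
    have h27 : Real.log (27/4) = Real.log 3 + Real.log (9/4) := by
      rw [show (27:ℝ)/4 = 3*(9/4) by norm_num,
        Real.log_mul (by norm_num) (by norm_num)]
    have hl3 := KT.log3_pos
    have hl94 := KT.log94_pos
    have hsum : Real.log 3 + Real.log (9/4) ≠ 0 := by positivity
    rw [KT.T, KT.S, h27]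
    field_simp
  have hconv : ((X.card : ℝ) * X.card * X.card) ^ KT.T
      = (X.card : ℝ) ^ (3 / (Real.log (27 / 4) / Real.log 3)) := by
    rw [show ((X.card : ℝ) * X.card * X.card) = (X.card : ℝ)^(3:ℕ) by ring,
      ← Real.rpow_natCast (X.card : ℝ) 3,
      ← Real.rpow_mul (Nat.cast_nonneg X.card), ← hexp]
    norm_num
  calc (((X ×ˢ X ×ˢ X).filter
      (fun t => Disjoint t.1 t.2.1 ∧ t.1 ∪ t.2.1 = t.2.2)).card : ℝ)
      = ((KT.trip X X X).card : ℝ) := rfl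
    _ ≤ ((X.card : ℝ) * X.card * X.card) ^ KT.T := h
    _ = _ := hconv
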